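/- Let U, V, W be vector spaces over a field K and φ : U × V → W a bilinear map. Suppose there are integers m and l such that dim_K φ(u, V) ≤ m for every u ∈ U and dim_K φ(U, v) ≤ l for every v ∈ V, where φ(u,V) and φ(U,v) denote the subspaces {φ(u,v) : v ∈ V} and the span of {φ(u,v) : u ∈ U}, respectively. Then the K-linear span of the set φ(U,V) = {φ(u,v) : u ∈ U, v ∈ V} has dimension at most m·l. -/

import Mathlib

open LinearMap Submodule Module

section Neumann

variable {K U V W : Type*} [Field K]
    [AddCommGroup U] [Module K U] [AddCommGroup V] [Module K V]
    [AddCommGroup W] [Module K W]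

private lemma fd_of_rank_le {X : Type*} [AddCommGroup X] [Module K X] {m : ℕ}
    (h : Module.rank K X ≤ (m : Cardinal)) : FiniteDimensional K X :=
  IsNoetherian.iff_fg.mp (IsNoetherian.iff_rank_lt_aleph0.mpr
    (h.trans_lt (Cardinal.nat_lt_aleph0 m)))

set_option maxHeartbeats 1000000 in
/-- The asymmetric core of P. M. Neumann's key lemma. -/
private lemma neumann_core (φ : U →ₗ[K] V →ₗ[K] W) (u₀ : U) (v₀ : V)
    (hfd : ∀ u : U, FiniteDimensional K (LinearMap.range (φ u)))
    (hfd' : ∀ v : V, FiniteDimensional K (LinearMap.range (φ.flip v)))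
    (hmaxl : ∀ u : U, finrank K (LinearMap.range (φ u)) ≤ finrank K (LinearMap.range (φ u₀)))
    (hmaxr : ∀ v : V,
      finrank K (LinearMap.range (φ.flip v)) ≤ finrank K (LinearMap.range (φ.flip v₀)))
    (hn : 0 < finrank K (LinearMap.range (φ u₀)))
    (hml : finrank K (LinearMap.range (φ u₀)) ≤ finrank K (LinearMap.range (φ.flip v₀)))
    (hbot : LinearMap.range (φ u₀) ⊓ LinearMap.range (φ.flip v₀) = ⊥) : False := by
  classical
  set X := LinearMap.range (φ u₀) with hXdef
  set Y := LinearMap.range (φ.flip v₀) with hYdef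
  haveI : FiniteDimensional K X := hfd u₀
  haveI : FiniteDimensional K Y := hfd' v₀
  set n := finrank K X with hndef
  set L := finrank K Y with hLdef
  -- φ u₀ v₀ = 0
  have hzero : φ u₀ v₀ = 0 := by
    have h1 : φ u₀ v₀ ∈ X := ⟨v₀, rfl⟩
    have h2 : φ u₀ v₀ ∈ Y := ⟨u₀, rfl⟩
    have : φ u₀ v₀ ∈ X ⊓ Y := Submodule.mem_inf.mpr ⟨h1, h2⟩
    rw [hbot] at this
    simpa using this
  -- the projection π : W → X killing Y
  obtain ⟨π, hπX, hπY⟩ :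
      ∃ π : W →ₗ[K] X, (∀ x : X, π (x : W) = x) ∧ (∀ w ∈ Y, π w = 0) := by
    set f₀ : X →ₗ[K] (W ⧸ Y) := Y.mkQ ∘ₗ X.subtype with hf₀
    have hinj : Function.Injective f₀ := by
      rw [← LinearMap.ker_eq_bot]
      rw [Submodule.eq_bot_iff]
      rintro x hx
      have hxY : (x : W) ∈ Y := by
        have : Y.mkQ (x : W) = 0 := hx
        rwa [Submodule.mkQ_apply, Submodule.Quotient.mk_eq_zero] at this
      have : (x : W) ∈ X ⊓ Y := Submodule.mem_inf.mpr ⟨x.2, hxY⟩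
      rw [hbot] at this
      exact Subtype.ext (by simpa using this)
    set e := LinearEquiv.ofInjective f₀ hinj with he
    obtain ⟨C₁, hC₁⟩ := Submodule.exists_isCompl (LinearMap.range f₀)
    set p₁ := Submodule.linearProjOfIsCompl _ _ hC₁ with hp₁
    refine ⟨e.symm.toLinearMap ∘ₗ p₁ ∘ₗ Y.mkQ, fun x => ?_, fun w hw => ?_⟩
    · have h1 : Y.mkQ (x : W) = ((e x : LinearMap.range f₀) : W ⧸ Y) := by
        simp [he, LinearEquiv.ofInjective_apply, hf₀]
      simp only [LinearMap.comp_apply, h1, Submodule.linearProjOfIsCompl_apply_left hC₁]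
      exact (congrArg e.symm (Submodule.linearProjOfIsCompl_apply_left hC₁ (e x))).trans
        (e.symm_apply_apply x)
    · have h1 : Y.mkQ w = 0 := by
        rw [Submodule.mkQ_apply, Submodule.Quotient.mk_eq_zero]; exact hw
      simp [h1]
  -- basis of X with preimages in V
  set bX := Module.finBasis K X with hbX
  have hvex : ∀ j, ∃ vv : V, φ u₀ vv = (bX j : W) := fun j => (bX j).2
  choose v hv using hvex
  set s : X →ₗ[K] V := bX.constr K v with hs
  have hsb : ∀ j, s (bX j) = v j := fun j => bX.constr_basis K v j
  -- identity composition
  have hid : π ∘ₗ ((φ u₀) ∘ₗ s) = LinearMap.id := by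
    apply bX.ext
    intro j
    simp only [LinearMap.comp_apply, hsb, hv, LinearMap.id_apply]
    exact hπX (bX j)
  -- key vanishing lemma
  have key : ∀ (t : K) (u' : U), φ u' v₀ ≠ 0 →
      LinearMap.det (π ∘ₗ ((φ (t • u₀ + u')) ∘ₗ s)) = 0 := by
    intro t u' hu'
    set uu := t • u₀ + u' with huu
    set E := π ∘ₗ ((φ uu) ∘ₗ s) with hE
    by_contra hdet
    haveI : FiniteDimensional K (LinearMap.range (φ uu)) := hfd uu
    have hsurj : LinearMap.range E = ⊤ := by
      have : Function.Surjective E := (LinearMap.equivOfDetNeZero E hdet).surjective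
      rwa [← LinearMap.range_eq_top] at this
    set S := LinearMap.range (φ uu) with hS
    set g : S →ₗ[K] X := π ∘ₗ S.subtype with hg
    have hrange : LinearMap.range E ≤ LinearMap.range g := by
      rintro _ ⟨x, rfl⟩
      exact ⟨⟨φ uu (s x), ⟨s x, rfl⟩⟩, rfl⟩
    have hy' : φ uu v₀ = φ u' v₀ := by
      simp [huu, hzero]
    have hy'Y : φ uu v₀ ∈ Y := ⟨uu, rfl⟩
    have hrk : finrank K (LinearMap.range g) + finrank K (LinearMap.ker g) = finrank K S :=
      g.finrank_range_add_finrank_ker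
    have hkpos : 0 < finrank K (LinearMap.ker g) := by
      have hz : (⟨φ uu v₀, ⟨v₀, rfl⟩⟩ : S) ∈ LinearMap.ker g := by
        simp only [LinearMap.mem_ker, hg, LinearMap.comp_apply, Submodule.subtype_apply]
        exact hπY _ hy'Y
      have hz0 : (⟨φ uu v₀, ⟨v₀, rfl⟩⟩ : S) ≠ 0 := by
        intro hzz
        apply hu'
        rw [← hy']
        exact congrArg Subtype.val hzz
      have hne : LinearMap.ker g ≠ ⊥ := by
        intro hk
        rw [hk] at hz
        exact hz0 (by simpa using hz)
      have : finrank K (LinearMap.ker g) ≠ 0 := fun h0 => hne (Submodule.finrank_eq_zero.mp h0)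
      omega
    have hSn : finrank K S ≤ n := hmaxl uu
    have hEn : finrank K (LinearMap.range E) = n := by
      rw [hsurj]
      exact finrank_top K X
    have hle : finrank K (LinearMap.range E) ≤ finrank K (LinearMap.range g) :=
      Submodule.finrank_mono hrange
    omega
  -- basis of Y with preimages in U
  set bY := Module.finBasis K Y with hbY
  have huex : ∀ i, ∃ uu : U, φ uu v₀ = (bY i : W) := fun i => (bY i).2
  choose u hu using huex
  -- nonvanishing of φ (∑ cᵢ uᵢ) v₀ for c ≠ 0
  have hcne : ∀ c : Fin L → K, c ≠ 0 → φ (∑ i, c i • u i) v₀ ≠ 0 := by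
    intro c hc
    have hφc : φ (∑ i, c i • u i) v₀ = ((∑ i, c i • bY i : Y) : W) := by
      simp only [map_sum, map_smul, LinearMap.sum_apply, LinearMap.smul_apply]
      rw [Submodule.coe_sum]
      exact Finset.sum_congr rfl fun i _ => by rw [hu i, SetLike.val_smul]
    rw [hφc]
    intro h0
    have : (∑ i, c i • bY i : Y) = 0 := by exact_mod_cast h0
    have hind := Fintype.linearIndependent_iff.mp bY.linearIndependent c this
    exact hc (funext hind)
  -- pointwise expansion on basis vectors
  have hEapp : ∀ (u' : U) (t : K) (k : Fin n),
      (π ∘ₗ ((φ (t • u₀ + u')) ∘ₗ s)) (bX k) = t • bX k + π (φ u' (v k)) := by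
    intro u' t k
    simp only [LinearMap.comp_apply, hsb]
    rw [map_add φ, map_smul φ, LinearMap.add_apply, LinearMap.smul_apply, map_add π, map_smul π,
      hv, hπX]
  -- entries of the relevant matrices
  have hMentry : ∀ (u' : U) (t : K) (j k : Fin n),
      LinearMap.toMatrix bX bX (π ∘ₗ ((φ (t • u₀ + u')) ∘ₗ s)) j k
        = (if k = j then t else 0) + bX.repr (π (φ u' (v k))) j := by
    intro u' t j k
    rw [LinearMap.toMatrix_apply, hEapp, map_add, map_smul, Finsupp.add_apply,
      Finsupp.smul_apply, Basis.repr_self, Finsupp.single_apply, smul_eq_mul, mul_ite,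
      mul_one, mul_zero]
  -- case split on the field
  rcases finite_or_infinite K with hK | hK
  · -- finite field : Chevalley--Warning argument
    haveI := Fintype.ofFinite K
    set q := Fintype.card K with hq
    have hq2 : 1 < q := Fintype.one_lt_card
    set P : Matrix (Fin n) (Fin n) (MvPolynomial (Option (Fin L)) K) :=
      Matrix.of fun j k =>
        (if k = j then MvPolynomial.X none else 0) +
          ∑ i, MvPolynomial.C (bX.repr (π (φ (u i) (v k))) j) * MvPolynomial.X (some i)
      with hP
    -- total degree bounds
    have hPdeg : ∀ j k, (P j k).totalDegree ≤ 1 := by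
      intro j k
      rw [hP]
      refine le_trans (MvPolynomial.totalDegree_add _ _) (max_le ?_ ?_)
      · by_cases h : k = j <;> simp [h, MvPolynomial.totalDegree_X]
      · refine le_trans (MvPolynomial.totalDegree_finset_sum _ _) ?_
        refine Finset.sup_le fun i _ => ?_
        refine le_trans (MvPolynomial.totalDegree_mul _ _) ?_
        simp [MvPolynomial.totalDegree_X]
    have hdetdeg : P.det.totalDegree ≤ n := by
      rw [Matrix.det_apply]
      refine le_trans (MvPolynomial.totalDegree_finset_sum _ _) ?_
      refine Finset.sup_le fun σ _ => ?_
      have h1 : (Equiv.Perm.sign σ • ∏ i, P (σ i) i).totalDegree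
          = (∏ i, P (σ i) i).totalDegree := by
        rcases Int.units_eq_one_or (Equiv.Perm.sign σ) with h | h <;>
          simp [h, MvPolynomial.totalDegree_neg]
      rw [h1]
      refine le_trans (MvPolynomial.totalDegree_finset_prod _ _) ?_
      calc ∑ i, (P (σ i) i).totalDegree ≤ ∑ _i : Fin n, 1 :=
            Finset.sum_le_sum fun i _ => hPdeg _ _
        _ = n := by simp
    -- evaluation of P entries
    have hPev : ∀ x : Option (Fin L) → K,
        P.map (MvPolynomial.eval x) =
          LinearMap.toMatrix bX bX
            (π ∘ₗ ((φ ((x none) • u₀ + ∑ i, x (some i) • u i)) ∘ₗ s)) := by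
      intro x
      ext j k
      rw [Matrix.map_apply, hMentry]
      have hsum : π (φ (∑ i, x (some i) • u i) (v k)) = ∑ i, x (some i) • π (φ (u i) (v k)) := by
        simp [map_sum, map_smul, LinearMap.sum_apply, LinearMap.smul_apply]
      rw [hsum, map_sum, Finsupp.finset_sum_apply]
      rw [hP]
      simp only [Matrix.of_apply, map_add, map_sum, _root_.map_mul, MvPolynomial.eval_C,
        MvPolynomial.eval_X]
      congr 1
      · split <;> simp
      · exact Finset.sum_congr rfl fun i _ => by
          rw [map_smul, Finsupp.smul_apply, smul_eq_mul, mul_comm]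
    -- the polynomial F and Chevalley--Warning
    set F := P.det ^ (q - 1) with hF
    have hFdeg : F.totalDegree < (q - 1) * Fintype.card (Option (Fin L)) := by
      have h1 : F.totalDegree ≤ (q - 1) * n :=
        le_trans (MvPolynomial.totalDegree_pow _ _) (Nat.mul_le_mul_left (q - 1) hdetdeg)
      have hcard : Fintype.card (Option (Fin L)) = L + 1 := by simp
      rw [hcard]
      have h2 : (q - 1) * n < (q - 1) * (L + 1) := by
        have hq1 : 0 < q - 1 := by omega
        have hnL : n < L + 1 := by omega
        exact mul_lt_mul_of_pos_left hnL hq1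
      omega
    have hsum0 : ∑ x : Option (Fin L) → K, MvPolynomial.eval x F = 0 :=
      MvPolynomial.sum_eval_eq_zero F hFdeg
    -- values of the evaluations
    have hval : ∀ x : Option (Fin L) → K,
        MvPolynomial.eval x F =
          if (fun i => x (some i)) = 0 then ((x none) ^ n) ^ (q - 1) else 0 := by
      intro x
      have hdet_ev : MvPolynomial.eval x P.det =
          LinearMap.det (π ∘ₗ ((φ ((x none) • u₀ + ∑ i, x (some i) • u i)) ∘ₗ s)) := by
        rw [← LinearMap.det_toMatrix bX, ← hPev x, RingHom.map_det, RingHom.mapMatrix_apply]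
      rw [hF, map_pow, hdet_ev]
      by_cases hc : (fun i => x (some i)) = 0
      · rw [if_pos hc]
        have hzero' : (∑ i, x (some i) • u i) = (0 : U) := by
          have h0 : ∀ i, x (some i) = 0 := fun i => congrFun hc i
          simp [h0]
        rw [hzero', add_zero, map_smul φ]
        have hcomp : π ∘ₗ (((x none) • φ u₀) ∘ₗ s) = (x none) • (π ∘ₗ ((φ u₀) ∘ₗ s)) := by
          rw [LinearMap.smul_comp, LinearMap.comp_smul]
        rw [hcomp, hid, LinearMap.det_smul, LinearMap.det_id, mul_one]
      · rw [if_neg hc]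
        rw [key (x none) _ (hcne _ hc)]
        exact zero_pow (by omega)
    -- computing the sum
    have hsum1 : ∑ x : Option (Fin L) → K, MvPolynomial.eval x F = -1 := by
      have hcompat : ∀ x : Option (Fin L) → K,
          MvPolynomial.eval x F =
            (fun p : K × (Fin L → K) => if p.2 = 0 then (p.1 ^ n) ^ (q - 1) else 0)
              ((Equiv.piOptionEquivProd (β := fun _ : Option (Fin L) => K)) x) := by
        intro x
        rw [hval x]
        rfl
      have hEq := Fintype.sum_equiv (Equiv.piOptionEquivProd (β := fun _ : Option (Fin L) => K))
        (fun x => MvPolynomial.eval x F)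
        (fun p : K × (Fin L → K) => if p.2 = 0 then (p.1 ^ n) ^ (q - 1) else 0) hcompat
      rw [hEq, Fintype.sum_prod_type]
      have hinner : ∀ t : K,
          (∑ c : Fin L → K, if c = 0 then (t ^ n) ^ (q - 1) else 0) = (t ^ n) ^ (q - 1) := by
        intro t
        rw [Finset.sum_ite_eq' Finset.univ (0 : Fin L → K) (fun _ => (t ^ n) ^ (q - 1))]
        simp
      rw [Finset.sum_congr rfl fun t _ => hinner t]
      -- ∑ t, (t^n)^(q-1) = q - 1 = -1
      rw [← Finset.add_sum_erase Finset.univ _ (Finset.mem_univ (0 : K))]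
      rw [zero_pow (by omega : n ≠ 0), zero_pow (by omega : q - 1 ≠ 0), zero_add]
      have hone : ∀ t ∈ Finset.univ.erase (0 : K), (t ^ n) ^ (q - 1) = 1 := by
        intro t ht
        have ht0 : t ≠ 0 := (Finset.mem_erase.mp ht).1
        exact FiniteField.pow_card_sub_one_eq_one _ (pow_ne_zero n ht0)
      rw [Finset.sum_congr rfl hone, Finset.sum_const, Finset.card_erase_of_mem (Finset.mem_univ _),
        Finset.card_univ, nsmul_eq_mul, mul_one]
      rw [Nat.cast_sub (by omega : 1 ≤ q)]
      rw [FiniteField.cast_card_eq_zero]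
      simp
    rw [hsum1] at hsum0
    exact one_ne_zero (neg_eq_zero.mp hsum0)
  · -- infinite field : characteristic polynomial argument
    have hL1 : 0 < L := lt_of_lt_of_le hn hml
    have hYne : Y ≠ ⊥ := by
      intro h
      have : finrank K Y = 0 := Submodule.finrank_eq_zero.mpr h
      omega
    obtain ⟨y, hyY, hy0⟩ := (Submodule.ne_bot_iff Y).mp hYne
    obtain ⟨u₁, hu₁⟩ := hyY
    have hu₁ne : φ u₁ v₀ ≠ 0 := by
      have : φ u₁ v₀ = y := hu₁
      rw [this]; exact hy0
    set A₁ := LinearMap.toMatrix bX bX (π ∘ₗ ((φ u₁) ∘ₗ s)) with hA₁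
    have hA₁entry : ∀ j k, A₁ j k = bX.repr (π (φ u₁ (v k))) j := by
      intro j k
      rw [hA₁, LinearMap.toMatrix_apply]
      simp [hsb]
    have hAt : ∀ t : K, (Matrix.charpoly (-A₁)).eval t = 0 := by
      intro t
      have h1 : LinearMap.det (π ∘ₗ ((φ (t • u₀ + u₁)) ∘ₗ s)) = 0 := key t u₁ hu₁ne
      have h2 : LinearMap.toMatrix bX bX (π ∘ₗ ((φ (t • u₀ + u₁)) ∘ₗ s))
          = t • (1 : Matrix (Fin n) (Fin n) K) + A₁ := by
        ext j k
        rw [hMentry, Matrix.add_apply, Matrix.smul_apply, Matrix.one_apply, hA₁entry,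
          smul_eq_mul, mul_ite, mul_one, mul_zero]
        congr 1
        by_cases h : k = j
        · simp [h]
        · rw [if_neg h, if_neg (fun hh => h hh.symm)]
      have h3 : (Matrix.charpoly (-A₁)).eval t
          = (t • (1 : Matrix (Fin n) (Fin n) K) + A₁).det := by
        rw [Matrix.charpoly]
        rw [show Polynomial.eval t (Matrix.charmatrix (-A₁)).det
              = ((Matrix.charmatrix (-A₁)).map (Polynomial.eval t)).det from
            RingHom.map_det (Polynomial.evalRingHom t) _]
        congr 1
        ext i j
        by_cases h : i = j
        · subst h
          simp [Matrix.charmatrix_apply_eq, Matrix.one_apply]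
        · simp [Matrix.charmatrix_apply_ne _ _ _ h, Matrix.one_apply, h]
      rw [h3, ← h2, LinearMap.det_toMatrix, h1]
    have hfin := Polynomial.finite_setOf_isRoot
      (p := Matrix.charpoly (-A₁)) (Matrix.charpoly_monic _).ne_zero
    have huniv : {t : K | (Matrix.charpoly (-A₁)).IsRoot t} = Set.univ :=
      Set.eq_univ_of_forall fun t => hAt t
    rw [huniv] at hfin
    exact Set.infinite_univ hfin

/-- P. M. Neumann's key lemma : two slices of maximal dimension intersect nontrivially. -/
private lemma neumann_inf_ne_bot (φ : U →ₗ[K] V →ₗ[K] W) (u₀ : U) (v₀ : V)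
    (hfd : ∀ u : U, FiniteDimensional K (LinearMap.range (φ u)))
    (hfd' : ∀ v : V, FiniteDimensional K (LinearMap.range (φ.flip v)))
    (hmaxl : ∀ u : U, finrank K (LinearMap.range (φ u)) ≤ finrank K (LinearMap.range (φ u₀)))
    (hmaxr : ∀ v : V,
      finrank K (LinearMap.range (φ.flip v)) ≤ finrank K (LinearMap.range (φ.flip v₀)))
    (hn : 0 < finrank K (LinearMap.range (φ u₀))) :
    LinearMap.range (φ u₀) ⊓ LinearMap.range (φ.flip v₀) ≠ ⊥ := by
  intro hbot
  -- positivity of the right side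
  have hl1 : 0 < finrank K (LinearMap.range (φ.flip v₀)) := by
    haveI := hfd u₀
    have : LinearMap.range (φ u₀) ≠ ⊥ := by
      intro h
      have : finrank K (LinearMap.range (φ u₀)) = 0 := Submodule.finrank_eq_zero.mpr h
      omega
    obtain ⟨x, hxX, hx0⟩ := (Submodule.ne_bot_iff _).mp this
    obtain ⟨v₁, hv₁⟩ := hxX
    have h1 : φ u₀ v₁ ≠ 0 := by rw [hv₁]; exact hx0
    have h2 : 0 < finrank K (LinearMap.range (φ.flip v₁)) := by
      haveI := hfd' v₁
      have : LinearMap.range (φ.flip v₁) ≠ ⊥ := by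
        intro h
        apply h1
        have : φ.flip v₁ u₀ ∈ LinearMap.range (φ.flip v₁) := ⟨u₀, rfl⟩
        rw [h] at this
        simpa using this
      have := Submodule.finrank_eq_zero (S := LinearMap.range (φ.flip v₁)).not.mpr this
      omega
    exact lt_of_lt_of_le h2 (hmaxr v₁)
  rcases le_total (finrank K (LinearMap.range (φ u₀))) (finrank K (LinearMap.range (φ.flip v₀)))
    with hml | hml
  · exact neumann_core φ u₀ v₀ hfd hfd' hmaxl hmaxr hn hml hbot
  · apply neumann_core φ.flip v₀ u₀ hfd' (fun u => hfd u)
      hmaxr (fun u => hmaxl u) hl1 (by simpa [LinearMap.flip_flip])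
    · rw [LinearMap.flip_flip]
      rw [inf_comm]
      exact hbot

/-- quotienting by a submodule meeting a f.d. submodule nontrivially drops its dimension -/
private lemma finrank_map_mkQ_lt {Y S : Submodule K W} [FiniteDimensional K S]
    (h : S ⊓ Y ≠ ⊥) : finrank K (S.map Y.mkQ) < finrank K S := by
  classical
  set g : S →ₗ[K] (W ⧸ Y) := Y.mkQ ∘ₗ S.subtype with hg
  have hrange : LinearMap.range g = S.map Y.mkQ := by
    rw [hg, LinearMap.range_comp, Submodule.range_subtype]
  have hrk : finrank K (LinearMap.range g) + finrank K (LinearMap.ker g) = finrank K S :=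
    g.finrank_range_add_finrank_ker
  have hker : LinearMap.ker g ≠ ⊥ := by
    obtain ⟨z, hz, hz0⟩ := (Submodule.ne_bot_iff _).mp h
    have hzS : z ∈ S := (Submodule.mem_inf.mp hz).1
    have hzY : z ∈ Y := (Submodule.mem_inf.mp hz).2
    intro hk
    have : (⟨z, hzS⟩ : S) ∈ LinearMap.ker g := by
      simp only [LinearMap.mem_ker, hg, LinearMap.comp_apply, Submodule.subtype_apply,
        Submodule.mkQ_apply, Submodule.Quotient.mk_eq_zero]
      exact hzY
    rw [hk] at this
    exact hz0 (by simpa using this)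
  have hkpos : 0 < finrank K (LinearMap.ker g) := by
    have : finrank K (LinearMap.ker g) ≠ 0 := fun h0 => hker (Submodule.finrank_eq_zero.mp h0)
    omega
  rw [← hrange]
  omega

private lemma finrank_map_mkQ_le {Y S : Submodule K W} [FiniteDimensional K S] :
    finrank K (S.map Y.mkQ) ≤ finrank K S :=
  Submodule.finrank_map_le Y.mkQ S

/-- The inductive form of P. M. Neumann's lemma. -/
private lemma neumann_aux (m : ℕ) :
    ∀ (l : ℕ) {W : Type*} [AddCommGroup W] [Module K W] (φ : U →ₗ[K] V →ₗ[K] W),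
      (∀ u : U, Module.rank K (LinearMap.range (φ u)) ≤ (m : Cardinal)) →
      (∀ v : V, Module.rank K (LinearMap.range (φ.flip v)) ≤ (l : Cardinal)) →
      Module.rank K (Submodule.span K {w : W | ∃ (u : U) (v : V), w = φ u v}) ≤
        ((m * l : ℕ) : Cardinal) := by
  induction m with
  | zero =>
    intro l W _ _ φ hm hl
    have hset : {w : W | ∃ (u : U) (v : V), w = φ u v} ⊆ {0} := by
      rintro w ⟨u, v, rfl⟩
      have h1 : Module.rank K (LinearMap.range (φ u)) = 0 := le_antisymm (by simpa using hm u)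
        zero_le
      have h2 : LinearMap.range (φ u) = ⊥ := by
        haveI : FiniteDimensional K (LinearMap.range (φ u)) := fd_of_rank_le (hm u)
        apply Submodule.finrank_eq_zero.mp
        have := Module.finrank_eq_rank K (LinearMap.range (φ u))
        rw [h1] at this
        exact_mod_cast this
      have : φ u v ∈ LinearMap.range (φ u) := ⟨v, rfl⟩
      rw [h2] at this
      simpa using this
    have : Submodule.span K {w : W | ∃ (u : U) (v : V), w = φ u v} ≤ ⊥ := by
      rw [← Submodule.span_zero_singleton K]
      exact Submodule.span_mono hset
    calc Module.rank K (Submodule.span K {w : W | ∃ (u : U) (v : V), w = φ u v})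
        ≤ Module.rank K (⊥ : Submodule K W) := Submodule.rank_mono this
      _ = 0 := rank_bot K W
      _ ≤ _ := zero_le
  | succ m ih =>
    intro l W _ _ φ hm hl
    haveI hfd : ∀ u : U, FiniteDimensional K (LinearMap.range (φ u)) :=
      fun u => fd_of_rank_le (hm u)
    haveI hfd' : ∀ v : V, FiniteDimensional K (LinearMap.range (φ.flip v)) :=
      fun v => fd_of_rank_le (hl v)
    have hmf : ∀ u : U, finrank K (LinearMap.range (φ u)) ≤ m + 1 := by
      intro u
      haveI := hfd u
      exact finrank_le_of_rank_le (by exact_mod_cast hm u)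
    have hlf : ∀ v : V, finrank K (LinearMap.range (φ.flip v)) ≤ l := by
      intro v
      haveI := hfd' v
      exact finrank_le_of_rank_le (by exact_mod_cast hl v)
    -- maximal right slice
    set B := Set.range fun v : V => finrank K (LinearMap.range (φ.flip v)) with hB
    have hBne : B.Nonempty := ⟨_, ⟨0, rfl⟩⟩
    have hBbdd : BddAbove B := ⟨l, by rintro _ ⟨v, rfl⟩; exact hlf v⟩
    obtain ⟨v₀, hv₀⟩ : ∃ v₀ : V, finrank K (LinearMap.range (φ.flip v₀)) = sSup B :=
      Nat.sSup_mem hBne hBbdd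
    have hmaxr : ∀ v : V, finrank K (LinearMap.range (φ.flip v))
        ≤ finrank K (LinearMap.range (φ.flip v₀)) := by
      intro v
      rw [hv₀]
      exact le_csSup hBbdd ⟨v, rfl⟩
    set Y := LinearMap.range (φ.flip v₀) with hY
    -- maximal left slices
    set A := Set.range fun u : U => finrank K (LinearMap.range (φ u)) with hA
    have hAne : A.Nonempty := ⟨_, ⟨0, rfl⟩⟩
    have hAbdd : BddAbove A := ⟨m + 1, by rintro _ ⟨u, rfl⟩; exact hmf u⟩
    have hmax : ∀ u : U, finrank K (LinearMap.range (φ u)) ≤ sSup A :=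
      fun u => le_csSup hAbdd ⟨u, rfl⟩
    -- the quotient bilinear map
    set ψ : U →ₗ[K] V →ₗ[K] (W ⧸ Y) := φ.compr₂ Y.mkQ with hψ
    have hψu : ∀ u : U, ψ u = Y.mkQ ∘ₗ φ u := by
      intro u; ext v; simp [hψ, LinearMap.compr₂_apply]
    have hψv : ∀ v : V, ψ.flip v = Y.mkQ ∘ₗ φ.flip v := by
      intro v; ext u; simp [hψ, LinearMap.compr₂_apply, LinearMap.flip_apply]
    -- left slices drop
    have hψm : ∀ u : U, Module.rank K (LinearMap.range (ψ u)) ≤ (m : Cardinal) := by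
      intro u
      have hrange : LinearMap.range (ψ u) = (LinearMap.range (φ u)).map Y.mkQ := by
        rw [hψu u, LinearMap.range_comp]
      haveI := hfd u
      haveI : FiniteDimensional K ((LinearMap.range (φ u)).map Y.mkQ) :=
        Module.Finite.map _ _
      have hfr : finrank K ((LinearMap.range (φ u)).map Y.mkQ) ≤ m := by
        by_cases hcase : finrank K (LinearMap.range (φ u)) = sSup A ∧ 0 < sSup A
        · -- maximal slice : use the key lemma
          obtain ⟨hceq, hcpos⟩ := hcase
          have hmaxl : ∀ u' : U, finrank K (LinearMap.range (φ u'))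
              ≤ finrank K (LinearMap.range (φ u)) := by
            intro u'; rw [hceq]; exact hmax u'
          have hne := neumann_inf_ne_bot φ u v₀ hfd hfd' hmaxl hmaxr (by omega)
          have hlt := finrank_map_mkQ_lt (K := K) (Y := Y)
            (S := LinearMap.range (φ u)) hne
          have := hmf u
          omega
        · -- non-maximal slice
          push_neg at hcase
          have hle := finrank_map_mkQ_le (K := K) (Y := Y) (S := LinearMap.range (φ u))
          have hmu := hmax u
          have hmA : sSup A ≤ m + 1 := csSup_le hAne (by rintro _ ⟨u', rfl⟩; exact hmf u')
          rcases Nat.eq_zero_or_pos (sSup A) with h0 | hpos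
          · omega
          · have hne := hcase
            rcases Nat.lt_or_ge (finrank K (LinearMap.range (φ u))) (sSup A) with hlt | hge
            · omega
            · have : finrank K (LinearMap.range (φ u)) = sSup A := by omega
              exact absurd hpos (by simpa [this] using hne this)
      rw [hrange]
      calc Module.rank K ((LinearMap.range (φ u)).map Y.mkQ)
          = (finrank K ((LinearMap.range (φ u)).map Y.mkQ) : Cardinal) :=
            (finrank_eq_rank K _).symm
        _ ≤ (m : Cardinal) := by exact_mod_cast hfr
    -- right slices stay bounded
    have hψl : ∀ v : V, Module.rank K (LinearMap.range (ψ.flip v)) ≤ (l : Cardinal) := by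
      intro v
      have hrange : LinearMap.range (ψ.flip v) = (LinearMap.range (φ.flip v)).map Y.mkQ := by
        rw [hψv v, LinearMap.range_comp]
      rw [hrange]
      calc Module.rank K ((LinearMap.range (φ.flip v)).map Y.mkQ)
          ≤ Module.rank K (LinearMap.range (φ.flip v)) := rank_map_le _ _
        _ ≤ (l : Cardinal) := hl v
    -- apply the induction hypothesis
    have hIH := ih l ψ hψm hψl
    -- assemble
    set S := Submodule.span K {w : W | ∃ (u : U) (v : V), w = φ u v} with hS
    set g : S →ₗ[K] (W ⧸ Y) := Y.mkQ ∘ₗ S.subtype with hg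
    have hrk : Module.rank K (LinearMap.range g) + Module.rank K (LinearMap.ker g)
        = Module.rank K S := g.rank_range_add_rank_ker
    have hrange_g : LinearMap.range g = S.map Y.mkQ := by
      rw [hg, LinearMap.range_comp, Submodule.range_subtype]
    have himage : S.map Y.mkQ = Submodule.span K {w' : W ⧸ Y | ∃ (u : U) (v : V), w' = ψ u v} := by
      rw [hS, Submodule.map_span]
      congr 1
      ext w'
      constructor
      · rintro ⟨w, ⟨u, v, rfl⟩, rfl⟩
        exact ⟨u, v, by simp [hψ, LinearMap.compr₂_apply]⟩
      · rintro ⟨u, v, rfl⟩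
        exact ⟨φ u v, ⟨u, v, rfl⟩, by simp [hψ, LinearMap.compr₂_apply]⟩
    have hrange_le : Module.rank K (LinearMap.range g) ≤ ((m * l : ℕ) : Cardinal) := by
      rw [hrange_g, himage]
      exact hIH
    have hker_le : Module.rank K (LinearMap.ker g) ≤ (l : Cardinal) := by
      have hker : LinearMap.ker g = (Y ⊓ S).comap S.subtype := by
        ext x
        simp only [LinearMap.mem_ker, hg, LinearMap.comp_apply, Submodule.subtype_apply,
          Submodule.mkQ_apply, Submodule.Quotient.mk_eq_zero, Submodule.mem_comap,
          Submodule.mem_inf]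
        exact ⟨fun h => ⟨h, x.2⟩, fun h => h.1⟩
      rw [hker]
      have hequiv := Submodule.comapSubtypeEquivOfLe (inf_le_right : Y ⊓ S ≤ S)
      calc Module.rank K ((Y ⊓ S).comap S.subtype) = Module.rank K (Y ⊓ S : Submodule K W) :=
            hequiv.rank_eq
        _ ≤ Module.rank K Y := Submodule.rank_mono inf_le_left
        _ ≤ (l : Cardinal) := hl v₀
    calc Module.rank K S = Module.rank K (LinearMap.range g) + Module.rank K (LinearMap.ker g) :=
          hrk.symm
      _ ≤ ((m * l : ℕ) : Cardinal) + (l : Cardinal) := add_le_add hrange_le hker_le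
      _ = (((m + 1) * l : ℕ) : Cardinal) := by
          rw [← Nat.cast_add]
          congr 1
          ring

end Neumann

/-- P. M. Neumann's lemma: let `φ : U × V → W` be a bilinear map of `K`-vector spaces such
that `dim φ(u, V) ≤ m` for all `u ∈ U` and `dim φ(U, v) ≤ l` for all `v ∈ V`.  Then the
span of `φ(U, V)` has dimension at most `m · l`. -/
theorem neumann_bilinear_dim_le
    {K U V W : Type*} [Field K]
    [AddCommGroup U] [Module K U] [AddCommGroup V] [Module K V]
    [AddCommGroup W] [Module K W]
    (φ : U →ₗ[K] V →ₗ[K] W) (m l : ℕ)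
    (hm : ∀ u : U, Module.rank K (LinearMap.range (φ u)) ≤ (m : Cardinal))
    (hl : ∀ v : V, Module.rank K (LinearMap.range (φ.flip v)) ≤ (l : Cardinal)) :
    Module.rank K (Submodule.span K {w : W | ∃ (u : U) (v : V), w = φ u v}) ≤
      ((m * l : ℕ) : Cardinal) :=
  neumann_aux m l φ hm hl
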